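/- Let U be an associative ℂ-algebra with elements t_{ij}(u) = δ_{ij} + Σ_{r≥1} t_{ij}^{(r)} u^{-r} (i,j ∈ ℤ_N) satisfying the Yangian relations (u-v)[t_{ij}(u), t_{kl}(v)] = t_{kj}(u)t_{il}(v) - t_{kj}(v)t_{il}(u). Define x_{ij}(u) = (1/N) Σ_{k∈ℤ_N} ω^{-ki} t_{k,k+j}(u). Then (u-v)[x_{ij}(u), x_{kl}(v)] = (1/N) Σ_{a,b∈ℤ_N} ω^{-ab} ( x_{k+a,j+b}(u) x_{i-a,l-b}(v) - x_{k+a,j+b}(v) x_{i-a,l-b}(u) ). -/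

import Mathlib

open BigOperators

noncomputable def omegaN (N : ℕ) : ℂ := Complex.exp (2 * Real.pi * Complex.I / N)

noncomputable def wpow (N : ℕ) (m : ZMod N) : ℂ := omegaN N ^ m.val

section aux
variable (N : ℕ) [NeZero N]

lemma omegaN_prim : IsPrimitiveRoot (omegaN N) N :=
  Complex.isPrimitiveRoot_exp N (NeZero.ne N)

lemma omegaN_pow_N : omegaN N ^ N = 1 := (omegaN_prim N).pow_eq_one

lemma omegaN_pow_mod (m : ℕ) : omegaN N ^ (m % N) = omegaN N ^ m := by
  conv_rhs => rw [← Nat.mod_add_div m N]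
  rw [pow_add, pow_mul, omegaN_pow_N, one_pow, mul_one]

lemma wpow_add (a b : ZMod N) : wpow N (a + b) = wpow N a * wpow N b := by
  unfold wpow
  rw [ZMod.val_add, omegaN_pow_mod, pow_add]

lemma wpow_zero : wpow N 0 = 1 := by simp [wpow, ZMod.val_zero]

lemma sum_zmod_val (f : ℕ → ℂ) : ∑ a : ZMod N, f a.val = ∑ i ∈ Finset.range N, f i := by
  refine Finset.sum_nbij' (fun a => a.val) (fun i => (i : ZMod N)) ?_ ?_ ?_ ?_ ?_
  · intro a _; exact Finset.mem_range.mpr (ZMod.val_lt a)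
  · intro i _; exact Finset.mem_univ _
  · intro a _; exact ZMod.natCast_zmod_val a
  · intro i hi; exact ZMod.val_cast_of_lt (Finset.mem_range.mp hi)
  · intro a _; rfl

lemma wpow_sum_eq (c : ZMod N) :
    ∑ a : ZMod N, wpow N (a * c) = if c = 0 then (N : ℂ) else 0 := by
  have hval : ∀ a : ZMod N, wpow N (a * c) = (omegaN N ^ c.val) ^ a.val := by
    intro a
    unfold wpow
    rw [ZMod.val_mul, omegaN_pow_mod, ← pow_mul, mul_comm c.val]
  simp only [hval]
  rw [sum_zmod_val N (fun i => (omegaN N ^ c.val) ^ i)]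
  split_ifs with hc
  · subst hc
    simp [ZMod.val_zero]
  · have hζ1 : omegaN N ^ c.val ≠ 1 := by
      intro h
      rcases ((omegaN_prim N).pow_eq_one_iff_dvd c.val).mp h with ⟨m, hm⟩
      have hlt := ZMod.val_lt c
      rcases Nat.eq_zero_or_pos m with rfl | hm0
      · simp only [Nat.mul_zero] at hm
        exact hc (by rwa [← ZMod.val_eq_zero])
      · have : N ≤ N * m := Nat.le_mul_of_pos_right N hm0
        omega
    rw [geom_sum_eq hζ1, ← pow_mul, mul_comm c.val N, pow_mul, omegaN_pow_N, one_pow]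
    simp

lemma expand {U : Type*} [Ring U] [Algebra ℂ U] (c : ℂ)
    (A B : ZMod N → ℂ) (f g : ZMod N → U) :
    (c • ∑ p : ZMod N, A p • f p) * (c • ∑ q : ZMod N, B q • g q)
      = (c * c) • ∑ p : ZMod N, ∑ q : ZMod N, (A p * B q) • (f p * g q) := by
  rw [smul_mul_smul_comm, Finset.sum_mul_sum]
  simp only [smul_mul_smul_comm]

lemma swap4 {M : Type*} [AddCommMonoid M] (G : ZMod N → ZMod N → ZMod N → ZMod N → M) :
    ∑ a : ZMod N, ∑ b : ZMod N, ∑ p : ZMod N, ∑ q : ZMod N, G a b p q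
      = ∑ p : ZMod N, ∑ q : ZMod N, ∑ b : ZMod N, ∑ a : ZMod N, G a b p q := by
  have e1 : ∀ (H : ZMod N → ZMod N → ZMod N → M),
      ∑ b : ZMod N, ∑ p : ZMod N, ∑ q : ZMod N, H b p q
        = ∑ p : ZMod N, ∑ q : ZMod N, ∑ b : ZMod N, H b p q := by
    intro H
    rw [Finset.sum_comm]
    exact Finset.sum_congr rfl fun p _ => Finset.sum_comm
  calc ∑ a : ZMod N, ∑ b : ZMod N, ∑ p : ZMod N, ∑ q : ZMod N, G a b p q
      = ∑ a : ZMod N, ∑ p : ZMod N, ∑ q : ZMod N, ∑ b : ZMod N, G a b p q :=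
        Finset.sum_congr rfl fun a _ => e1 _
    _ = ∑ p : ZMod N, ∑ q : ZMod N, ∑ a : ZMod N, ∑ b : ZMod N, G a b p q := e1 _
    _ = ∑ p : ZMod N, ∑ q : ZMod N, ∑ b : ZMod N, ∑ a : ZMod N, G a b p q :=
        Finset.sum_congr rfl fun p _ => Finset.sum_congr rfl fun q _ => Finset.sum_comm

end aux


/-- Principal form of the Yangian defining relation.  Here `U` is an associative
`ℂ`-algebra, `u v ∈ U` play the role of the parameters, `t i j` stands for `t_{ij}(u)` and
`tv i j` for `t_{ij}(v)`, satisfying the Yangian relation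
`(u-v)[t_{ij}(u),t_{kl}(v)] = t_{kj}(u)t_{il}(v) - t_{kj}(v)t_{il}(u)`.
For the principal generating series `x_{ij}(u) = (1/N) Σ_k ω^{-ki} t_{k,k+j}(u)` one has
`(u-v)[x_{ij}(u),x_{kl}(v)]
  = (1/N) Σ_{a,b} ω^{-ab} (x_{k+a,j+b}(u)x_{i-a,l-b}(v) - x_{k+a,j+b}(v)x_{i-a,l-b}(u))`. -/
theorem principal_yangian_relation (N : ℕ) [NeZero N]
    (U : Type*) [Ring U] [Algebra ℂ U] (u v : U)
    (t tv : ZMod N → ZMod N → U)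
    (hrel : ∀ i j k l : ZMod N,
      (u - v) * (t i j * tv k l - tv k l * t i j) =
        t k j * tv i l - tv k j * t i l)
    (x xv : ZMod N → ZMod N → U)
    (hx : ∀ i j : ZMod N, x i j = (N : ℂ)⁻¹ • ∑ k : ZMod N, wpow N (-(k * i)) • t k (k + j))
    (hxv : ∀ i j : ZMod N,
      xv i j = (N : ℂ)⁻¹ • ∑ k : ZMod N, wpow N (-(k * i)) • tv k (k + j)) :
    ∀ i j k l : ZMod N,
      (u - v) * (x i j * xv k l - xv k l * x i j) =
        (N : ℂ)⁻¹ • ∑ a : ZMod N, ∑ b : ZMod N,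
          wpow N (-(a * b)) •
            (x (k + a) (j + b) * xv (i - a) (l - b) -
              xv (k + a) (j + b) * x (i - a) (l - b)) := by
  intro i j k l
  have hN : (N : ℂ) ≠ 0 := Nat.cast_ne_zero.mpr (NeZero.ne N)
  set cN2 : ℂ := (N : ℂ)⁻¹ * (N : ℂ)⁻¹ with hcN2
  -- canonical middle term
  set T : ZMod N → ZMod N → U := fun p q =>
    t p (q + j) * tv q (p + l) - tv p (q + j) * t q (p + l) with hT
  set C : ZMod N → ZMod N → ℂ := fun p q =>
    wpow N (-(p * k)) * wpow N (-(q * i)) with hC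
  -- LHS
  have hprod1 : x i j * xv k l = cN2 • ∑ p : ZMod N, ∑ q : ZMod N,
      (wpow N (-(p * i)) * wpow N (-(q * k))) • (t p (p + j) * tv q (q + l)) := by
    rw [hx, hxv]; exact expand N _ _ _ _ _
  have hprod2 : xv k l * x i j = cN2 • ∑ p : ZMod N, ∑ q : ZMod N,
      (wpow N (-(p * i)) * wpow N (-(q * k))) • (tv q (q + l) * t p (p + j)) := by
    rw [hx, hxv, expand N, Finset.sum_comm]
    congr 1
    refine Finset.sum_congr rfl fun p _ => Finset.sum_congr rfl fun q _ => ?_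
    rw [mul_comm]
  have hL : (u - v) * (x i j * xv k l - xv k l * x i j)
      = cN2 • ∑ p : ZMod N, ∑ q : ZMod N,
          (wpow N (-(p * i)) * wpow N (-(q * k))) •
            (t q (p + j) * tv p (q + l) - tv q (p + j) * t p (q + l)) := by
    rw [hprod1, hprod2]
    simp only [← smul_sub, ← Finset.sum_sub_distrib]
    rw [mul_smul_comm, Finset.mul_sum]
    congr 1
    refine Finset.sum_congr rfl fun p _ => ?_
    rw [Finset.mul_sum]
    refine Finset.sum_congr rfl fun q _ => ?_
    rw [mul_smul_comm, hrel p (p + j) q (q + l)]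
  have hL' : (u - v) * (x i j * xv k l - xv k l * x i j)
      = cN2 • ∑ p : ZMod N, ∑ q : ZMod N, C p q • T p q := by
    rw [hL, Finset.sum_comm]
    congr 1
    refine Finset.sum_congr rfl fun p _ => Finset.sum_congr rfl fun q _ => ?_
    rw [hC, hT, mul_comm]
  -- RHS per-(a,b) expansion
  have hR1 : ∀ a b : ZMod N,
      x (k + a) (j + b) * xv (i - a) (l - b) - xv (k + a) (j + b) * x (i - a) (l - b)
        = cN2 • ∑ p : ZMod N, ∑ q : ZMod N,
            (wpow N (-(p * (k + a))) * wpow N (-(q * (i - a)))) •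
              (t p (p + (j + b)) * tv q (q + (l - b))
                - tv p (p + (j + b)) * t q (q + (l - b))) := by
    intro a b
    simp only [hx, hxv]
    rw [expand N, expand N]
    simp only [← smul_sub, ← Finset.sum_sub_distrib]
    rfl
  have hcoef : ∀ a b p q : ZMod N,
      wpow N (-(a * b)) * (wpow N (-(p * (k + a))) * wpow N (-(q * (i - a))))
        = C p q * wpow N (a * (q - p - b)) := by
    intro a b p q
    rw [hC]
    simp only [← wpow_add]
    congr 1
    ring
  have hinner : ∀ p q : ZMod N,
      (∑ b : ZMod N, ∑ a : ZMod N,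
        (wpow N (-(a * b)) * (wpow N (-(p * (k + a))) * wpow N (-(q * (i - a))))) •
          (t p (p + (j + b)) * tv q (q + (l - b))
            - tv p (p + (j + b)) * t q (q + (l - b))))
        = (N : ℂ) • (C p q • T p q) := by
    intro p q
    have h1 : ∀ b : ZMod N,
        (∑ a : ZMod N,
          (wpow N (-(a * b)) * (wpow N (-(p * (k + a))) * wpow N (-(q * (i - a))))) •
            (t p (p + (j + b)) * tv q (q + (l - b))
              - tv p (p + (j + b)) * t q (q + (l - b))))
          = (C p q * (if q - p - b = 0 then (N : ℂ) else 0)) •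
              (t p (p + (j + b)) * tv q (q + (l - b))
                - tv p (p + (j + b)) * t q (q + (l - b))) := by
      intro b
      simp only [hcoef]
      rw [← Finset.sum_smul, ← Finset.mul_sum, wpow_sum_eq]
    simp only [h1]
    rw [Finset.sum_eq_single (q - p)]
    · have e0 : q - p - (q - p) = (0 : ZMod N) := sub_self _
      have e1 : p + (j + (q - p)) = q + j := by ring
      have e2 : q + (l - (q - p)) = p + l := by ring
      rw [e0, if_pos rfl, e1, e2, smul_smul, mul_comm (C p q) ((N : ℂ))]
    · intro b _ hb
      rw [if_neg, mul_zero, zero_smul]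
      intro h
      exact hb (sub_eq_zero.mp h).symm
    · intro h
      exact absurd (Finset.mem_univ _) h
  -- assemble RHS
  rw [hL']
  calc cN2 • ∑ p : ZMod N, ∑ q : ZMod N, C p q • T p q
      = (N : ℂ)⁻¹ • ((N : ℂ)⁻¹ • ∑ p : ZMod N, ∑ q : ZMod N, C p q • T p q) := by
        rw [smul_smul]
    _ = (N : ℂ)⁻¹ • (cN2 • ∑ p : ZMod N, ∑ q : ZMod N,
          (N : ℂ) • (C p q • T p q)) := by
        congr 1
        simp only [Finset.smul_sum, smul_smul]
        refine Finset.sum_congr rfl fun p _ => Finset.sum_congr rfl fun q _ => ?_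
        congr 1
        rw [hcN2]
        field_simp
    _ = (N : ℂ)⁻¹ • (cN2 • ∑ p : ZMod N, ∑ q : ZMod N,
          ∑ b : ZMod N, ∑ a : ZMod N,
            (wpow N (-(a * b)) * (wpow N (-(p * (k + a))) * wpow N (-(q * (i - a))))) •
              (t p (p + (j + b)) * tv q (q + (l - b))
                - tv p (p + (j + b)) * t q (q + (l - b)))) := by
        simp only [hinner]
    _ = (N : ℂ)⁻¹ • (cN2 • ∑ a : ZMod N, ∑ b : ZMod N,
          ∑ p : ZMod N, ∑ q : ZMod N,
            (wpow N (-(a * b)) * (wpow N (-(p * (k + a))) * wpow N (-(q * (i - a))))) •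
              (t p (p + (j + b)) * tv q (q + (l - b))
                - tv p (p + (j + b)) * t q (q + (l - b)))) := by
        congr 1
        congr 1
        exact (swap4 N _).symm
    _ = (N : ℂ)⁻¹ • ∑ a : ZMod N, ∑ b : ZMod N,
          wpow N (-(a * b)) •
            (x (k + a) (j + b) * xv (i - a) (l - b) -
              xv (k + a) (j + b) * x (i - a) (l - b)) := by
        congr 1
        simp only [hR1, Finset.smul_sum, smul_smul]
        refine Finset.sum_congr rfl fun a _ => Finset.sum_congr rfl fun b _ =>
          Finset.sum_congr rfl fun p _ => Finset.sum_congr rfl fun q _ => ?_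
        congr 1
        ring
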